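/- arXiv:2006.14259 — 7 statements merged into one kernel-verified Lean document; each statement's English description precedes it below -/
import Mathlib

section
/- Given an invertible dual quaternion q = p + εd (with p, d real quaternions, p ≠ 0), there exists an invertible dual number a such that a·q has real norm (i.e., the dual part of (aq)·conj(aq) vanishes). Moreover, a is determined up to a non-zero real multiple: if a and a' are two invertible dual numbers with this property, then a' = ra for some r ∈ ℝ×. -/
open TrivSqZeroExt

/-- Embedding of a real quaternion as the primal part of a dual quaternion. -/
def inlQ (p : Quaternion ℝ) : Quaternion (DualNumber ℝ) :=
  ⟨inl p.re, inl p.imI, inl p.imJ, inl p.imK⟩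

/-- Embedding of a real quaternion as the dual (`ε`) part of a dual quaternion. -/
def inrQ (d : Quaternion ℝ) : Quaternion (DualNumber ℝ) :=
  ⟨inr d.re, inr d.imI, inr d.imJ, inr d.imK⟩

/-- The scalar dual number `a₁ + εa₂`, viewed as a dual quaternion. -/
def scalarD (a₁ a₂ : ℝ) : Quaternion (DualNumber ℝ) :=
  @algebraMap (DualNumber ℝ) (Quaternion (DualNumber ℝ)) inferInstance inferInstance _ (inl a₁ + inr a₂)

/-- `a·q` has real norm, i.e. the dual part of its norm vanishes. -/
def HasRealNormMultiple (a₁ a₂ : ℝ) (q : Quaternion (DualNumber ℝ)) : Prop :=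
  snd (((scalarD a₁ a₂ * q) * star (scalarD a₁ a₂ * q)).re) = 0

theorem hasRealNormMultiple_iff (p d : Quaternion ℝ) (a₁ a₂ : ℝ) :
    HasRealNormMultiple a₁ a₂ (inlQ p + inrQ d) ↔
    a₁^2 * (2*(p.re*d.re + p.imI*d.imI + p.imJ*d.imJ + p.imK*d.imK))
      + 2*a₁*a₂*(p.re^2+p.imI^2+p.imJ^2+p.imK^2) = 0 := by
  have hs : scalarD a₁ a₂ = (⟨inl a₁ + inr a₂, 0, 0, 0⟩ : Quaternion (DualNumber ℝ)) := rfl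
  have hs1 : (scalarD a₁ a₂).re = inl a₁ + inr a₂ := rfl
  have hs2 : (scalarD a₁ a₂).imI = 0 := rfl
  have hs3 : (scalarD a₁ a₂).imJ = 0 := rfl
  have hs4 : (scalarD a₁ a₂).imK = 0 := rfl
  have hl1 : (inlQ p).re = inl p.re := rfl
  have hl2 : (inlQ p).imI = inl p.imI := rfl
  have hl3 : (inlQ p).imJ = inl p.imJ := rfl
  have hl4 : (inlQ p).imK = inl p.imK := rfl
  have hr1 : (inrQ d).re = inr d.re := rfl
  have hr2 : (inrQ d).imI = inr d.imI := rfl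
  have hr3 : (inrQ d).imJ = inr d.imJ := rfl
  have hr4 : (inrQ d).imK = inr d.imK := rfl
  simp only [HasRealNormMultiple, hs1, hs2, hs3, hs4, hl1, hl2, hl3, hl4, hr1, hr2, hr3, hr4,
    Quaternion.re_mul, Quaternion.re_add,
    Quaternion.imI_add, Quaternion.imJ_add, Quaternion.imK_add,
    Quaternion.re_star, Quaternion.imI_star, Quaternion.imJ_star, Quaternion.imK_star,
    Quaternion.imI_mul, Quaternion.imJ_mul, Quaternion.imK_mul]
  simp only [snd_mul, snd_add, snd_inl, snd_inr, fst_mul, fst_add, fst_inl, fst_inr,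
    snd_neg, fst_neg, snd_zero, fst_zero, smul_eq_mul, mul_zero, zero_mul, mul_one, add_zero,
    zero_add, neg_zero, sub_zero, zero_sub, neg_neg, MulOpposite.unop_op, MulOpposite.op_zero,
    MulOpposite.unop_zero, smul_zero, zero_smul]
  simp only [snd_sub, snd_mul, snd_add, snd_neg, snd_inl, snd_inr, fst_sub, fst_add, fst_inl,
    fst_inr, fst_neg, fst_mul, smul_eq_mul, MulOpposite.op_smul, MulOpposite.op_add,
    MulOpposite.smul_eq_mul_unop, MulOpposite.unop_op, mul_zero, zero_mul, add_zero, zero_add,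
    smul_zero, zero_smul, mul_one, one_mul]
  constructor <;> intro h <;> linarith [h]

/-- For an invertible dual quaternion `q = p + εd` (`p ≠ 0`) there is an
invertible dual number `a` such that `a·q` has real norm, and `a` is unique up
to a non-zero real multiple. -/
theorem exists_dual_scalar_real_norm (p d : Quaternion ℝ) (hp : p ≠ 0) :
    (∃ a₁ a₂ : ℝ, a₁ ≠ 0 ∧ HasRealNormMultiple a₁ a₂ (inlQ p + inrQ d)) ∧
    (∀ a₁ a₂ b₁ b₂ : ℝ, a₁ ≠ 0 → b₁ ≠ 0 →
      HasRealNormMultiple a₁ a₂ (inlQ p + inrQ d) →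
      HasRealNormMultiple b₁ b₂ (inlQ p + inrQ d) →
      ∃ r : ℝ, r ≠ 0 ∧ b₁ = r * a₁ ∧ b₂ = r * a₂) := by
  set N : ℝ := p.re^2+p.imI^2+p.imJ^2+p.imK^2 with hN
  set M : ℝ := p.re*d.re + p.imI*d.imI + p.imJ*d.imJ + p.imK*d.imK with hM
  have hN0 : N ≠ 0 := by
    intro h
    apply hp
    have h1 : p.re = 0 := by nlinarith [sq_nonneg p.re, sq_nonneg p.imI, sq_nonneg p.imJ, sq_nonneg p.imK]
    have h2 : p.imI = 0 := by nlinarith [sq_nonneg p.re, sq_nonneg p.imI, sq_nonneg p.imJ, sq_nonneg p.imK]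
    have h3 : p.imJ = 0 := by nlinarith [sq_nonneg p.re, sq_nonneg p.imI, sq_nonneg p.imJ, sq_nonneg p.imK]
    have h4 : p.imK = 0 := by nlinarith [sq_nonneg p.re, sq_nonneg p.imI, sq_nonneg p.imJ, sq_nonneg p.imK]
    ext <;> simp [h1, h2, h3, h4] <;> rfl
  constructor
  · refine ⟨1, -M/N, one_ne_zero, (hasRealNormMultiple_iff p d _ _).mpr ?_⟩
    field_simp
    rw [hM, hN]; ring
  · intro a₁ a₂ b₁ b₂ ha hb hA hB
    rw [hasRealNormMultiple_iff] at hA hB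
    refine ⟨b₁ / a₁, div_ne_zero hb ha, by field_simp, ?_⟩
    have hA' : a₁ * (a₁ * M + a₂ * N) = 0 := by rw [hM, hN]; linear_combination hA / 2
    have hB' : b₁ * (b₁ * M + b₂ * N) = 0 := by rw [hM, hN]; linear_combination hB / 2
    have hA'' := (mul_eq_zero.mp hA').resolve_left ha
    have hB'' := (mul_eq_zero.mp hB').resolve_left hb
    have ha2 : a₂ = -a₁ * M / N := by field_simp; linarith
    have hb2 : b₂ = -b₁ * M / N := by field_simp; linarith
    rw [ha2, hb2]
    field_simp
end

section
/- For the curves h(ω) = cos(ω/2) + sin(ω/2)k + (p/2)ω·ε(sin(ω/2) − cos(ω/2)k) (helical motion) and d(ω) = cos(ω/2) + sin(ω/2)k + (p/2)sin(ω)·ε(sin(ω/2) − cos(ω/2)k) (vertical Darboux motion with amplitude c = p) in the dual quaternions, one has h(0) = d(0), h'(0) = d'(0) = (1/2)k − (p/2)εk, h''(0) = d''(0) = −1/4 + (p/2)ε, but h'''(0) ≠ d'''(0); specifically h'''(0) = −(1/8)k + (3p/8)εk and d'''(0) = −(1/8)k + (7p/8)εk. -/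
open TrivSqZeroExt Real

noncomputable section

/-- The quaternion unit `k`. -/
def kQ : Quaternion ℝ := ⟨0, 0, 0, 1⟩

/-- The helical motion `h(ω)` with pitch `p`, as a curve of dual quaternions. -/
def helical (p : ℝ) (ω : ℝ) : DualNumber (Quaternion ℝ) :=
  inl ((cos (ω / 2) : ℝ) + (sin (ω / 2) : ℝ) • kQ)
    + inr ((p / 2 * ω) • ((sin (ω / 2) : ℝ) • (1 : Quaternion ℝ) - (cos (ω / 2)) • kQ))

/-- The vertical Darboux motion `d(ω)` with amplitude `p`. -/
def darboux (p : ℝ) (ω : ℝ) : DualNumber (Quaternion ℝ) :=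
  inl ((cos (ω / 2) : ℝ) + (sin (ω / 2) : ℝ) • kQ)
    + inr ((p / 2 * sin ω) • ((sin (ω / 2) : ℝ) • (1 : Quaternion ℝ) - (cos (ω / 2)) • kQ))

/-! ### Auxiliary machinery -/

lemma kQ_re : kQ.re = 0 := rfl
lemma kQ_imI : kQ.imI = 0 := rfl
lemma kQ_imJ : kQ.imJ = 0 := rfl
lemma kQ_imK : kQ.imK = 1 := rfl
lemma q1_re : (1 : Quaternion ℝ).re = 1 := rfl
lemma q1_imI : (1 : Quaternion ℝ).imI = 0 := rfl
lemma q1_imJ : (1 : Quaternion ℝ).imJ = 0 := rfl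
lemma q1_imK : (1 : Quaternion ℝ).imK = 0 := rfl
lemma q0_re : (0 : Quaternion ℝ).re = 0 := rfl
lemma q0_imI : (0 : Quaternion ℝ).imI = 0 := rfl
lemma q0_imJ : (0 : Quaternion ℝ).imJ = 0 := rfl
lemma q0_imK : (0 : Quaternion ℝ).imK = 0 := rfl
lemma qs_re (r : ℝ) (q : Quaternion ℝ) : (r • q).re = r * q.re := rfl
lemma qs_imI (r : ℝ) (q : Quaternion ℝ) : (r • q).imI = r * q.imI := rfl
lemma qs_imJ (r : ℝ) (q : Quaternion ℝ) : (r • q).imJ = r * q.imJ := rfl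
lemma qs_imK (r : ℝ) (q : Quaternion ℝ) : (r • q).imK = r * q.imK := rfl

/-- A curve in the dual quaternions with coefficient functions `a, b, u, v`. -/
def W (a b u v : ℝ → ℝ) (ω : ℝ) : DualNumber (Quaternion ℝ) :=
  a ω • inl 1 + b ω • inl kQ + u ω • inr 1 + v ω • inr kQ

lemma W_hasDerivAt {a b u v a' b' u' v' : ℝ → ℝ} {ω : ℝ}
    (ha : HasDerivAt a (a' ω) ω) (hb : HasDerivAt b (b' ω) ω)
    (hu : HasDerivAt u (u' ω) ω) (hv : HasDerivAt v (v' ω) ω) :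
    HasDerivAt (W a b u v) (W a' b' u' v' ω) ω :=
  (((ha.smul_const _).add (hb.smul_const _)).add (hu.smul_const _)).add (hv.smul_const (inr kQ : DualNumber (Quaternion ℝ)))

lemma hs2 (ω : ℝ) : HasDerivAt (fun t : ℝ => sin (t/2)) (1/2 * cos (ω/2)) ω := by
  have := (Real.hasDerivAt_sin (ω/2)).comp ω ((hasDerivAt_id ω).div_const 2)
  refine this.congr_deriv ?_
  ring

lemma hc2 (ω : ℝ) : HasDerivAt (fun t : ℝ => cos (t/2)) (-(1/2 * sin (ω/2))) ω := by
  have := (Real.hasDerivAt_cos (ω/2)).comp ω ((hasDerivAt_id ω).div_const 2)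
  refine this.congr_deriv ?_
  ring

/-! Coefficient functions: helical motion levels 0–3. -/

def A0 : ℝ → ℝ := fun t => cos (t/2)
def A1 : ℝ → ℝ := fun t => -(1/2 * sin (t/2))
def A2 : ℝ → ℝ := fun t => -(1/4 * cos (t/2))
def A3 : ℝ → ℝ := fun t => 1/8 * sin (t/2)
def B0 : ℝ → ℝ := fun t => sin (t/2)
def B1 : ℝ → ℝ := fun t => 1/2 * cos (t/2)
def B2 : ℝ → ℝ := fun t => -(1/4 * sin (t/2))
def B3 : ℝ → ℝ := fun t => -(1/8 * cos (t/2))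
def U0 (p : ℝ) : ℝ → ℝ := fun t => p/2 * t * sin (t/2)
def U1 (p : ℝ) : ℝ → ℝ := fun t => p/2 * sin (t/2) + p/4 * t * cos (t/2)
def U2 (p : ℝ) : ℝ → ℝ := fun t => p/2 * cos (t/2) - p/8 * t * sin (t/2)
def U3 (p : ℝ) : ℝ → ℝ := fun t => -(3*p/8 * sin (t/2)) - p/16 * t * cos (t/2)
def V0 (p : ℝ) : ℝ → ℝ := fun t => -(p/2 * t * cos (t/2))
def V1 (p : ℝ) : ℝ → ℝ := fun t => -(p/2 * cos (t/2)) + p/4 * t * sin (t/2)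
def V2 (p : ℝ) : ℝ → ℝ := fun t => p/2 * sin (t/2) + p/8 * t * cos (t/2)
def V3 (p : ℝ) : ℝ → ℝ := fun t => 3*p/8 * cos (t/2) - p/16 * t * sin (t/2)

/-! Coefficient functions: Darboux motion levels 0–3 (the `inl` part is shared). -/

def UD0 (p : ℝ) : ℝ → ℝ := fun t => p/2 * sin t * sin (t/2)
def UD1 (p : ℝ) : ℝ → ℝ := fun t => p/2 * (cos t * sin (t/2)) + p/4 * (sin t * cos (t/2))
def UD2 (p : ℝ) : ℝ → ℝ := fun t => p/2 * (cos t * cos (t/2)) - 5*p/8 * (sin t * sin (t/2))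
def UD3 (p : ℝ) : ℝ → ℝ := fun t => -(13*p/16 * (sin t * cos (t/2))) - 7*p/8 * (cos t * sin (t/2))
def VD0 (p : ℝ) : ℝ → ℝ := fun t => -(p/2 * sin t * cos (t/2))
def VD1 (p : ℝ) : ℝ → ℝ := fun t => -(p/2 * (cos t * cos (t/2))) + p/4 * (sin t * sin (t/2))
def VD2 (p : ℝ) : ℝ → ℝ := fun t => 5*p/8 * (sin t * cos (t/2)) + p/2 * (cos t * sin (t/2))
def VD3 (p : ℝ) : ℝ → ℝ := fun t => 7*p/8 * (cos t * cos (t/2)) - 13*p/16 * (sin t * sin (t/2))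

lemma hA0 (ω : ℝ) : HasDerivAt A0 (A1 ω) ω := hc2 ω
lemma hA1 (ω : ℝ) : HasDerivAt A1 (A2 ω) ω := by
  have := ((hs2 ω).const_mul (1/2 : ℝ)).neg
  refine this.congr_deriv ?_; simp [A2]; ring
lemma hA2 (ω : ℝ) : HasDerivAt A2 (A3 ω) ω := by
  have := ((hc2 ω).const_mul (1/4 : ℝ)).neg
  refine this.congr_deriv ?_; simp [A3]; ring
lemma hB0 (ω : ℝ) : HasDerivAt B0 (B1 ω) ω := hs2 ω
lemma hB1 (ω : ℝ) : HasDerivAt B1 (B2 ω) ω := by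
  have := (hc2 ω).const_mul (1/2 : ℝ)
  refine this.congr_deriv ?_; simp [B2]; ring
lemma hB2 (ω : ℝ) : HasDerivAt B2 (B3 ω) ω := by
  have := ((hs2 ω).const_mul (1/4 : ℝ)).neg
  refine this.congr_deriv ?_; simp [B3]; ring

lemma hU0 (p ω : ℝ) : HasDerivAt (U0 p) (U1 p ω) ω := by
  have := ((hasDerivAt_id ω).const_mul (p/2)).mul (hs2 ω)
  refine this.congr_deriv ?_; simp [U1]; ring
lemma hU1 (p ω : ℝ) : HasDerivAt (U1 p) (U2 p ω) ω := by
  have := ((hs2 ω).const_mul (p/2)).add (((hasDerivAt_id ω).const_mul (p/4)).mul (hc2 ω))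
  refine this.congr_deriv ?_; simp [U2]; ring
lemma hU2 (p ω : ℝ) : HasDerivAt (U2 p) (U3 p ω) ω := by
  have := ((hc2 ω).const_mul (p/2)).sub (((hasDerivAt_id ω).const_mul (p/8)).mul (hs2 ω))
  refine this.congr_deriv ?_; simp [U3]; ring
lemma hV0 (p ω : ℝ) : HasDerivAt (V0 p) (V1 p ω) ω := by
  have := (((hasDerivAt_id ω).const_mul (p/2)).mul (hc2 ω)).neg
  refine this.congr_deriv ?_; simp [V1]; ring
lemma hV1 (p ω : ℝ) : HasDerivAt (V1 p) (V2 p ω) ω := by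
  have := (((hc2 ω).const_mul (p/2)).neg).add (((hasDerivAt_id ω).const_mul (p/4)).mul (hs2 ω))
  refine this.congr_deriv ?_; simp [V2]; ring
lemma hV2 (p ω : ℝ) : HasDerivAt (V2 p) (V3 p ω) ω := by
  have := ((hs2 ω).const_mul (p/2)).add (((hasDerivAt_id ω).const_mul (p/8)).mul (hc2 ω))
  refine this.congr_deriv ?_; simp [V3]; ring

lemma hUD0 (p ω : ℝ) : HasDerivAt (UD0 p) (UD1 p ω) ω := by
  have := ((Real.hasDerivAt_sin ω).const_mul (p/2)).mul (hs2 ω)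
  refine this.congr_deriv ?_; simp [UD1]; ring
lemma hUD1 (p ω : ℝ) : HasDerivAt (UD1 p) (UD2 p ω) ω := by
  have := (((Real.hasDerivAt_cos ω).mul (hs2 ω)).const_mul (p/2)).add
    (((Real.hasDerivAt_sin ω).mul (hc2 ω)).const_mul (p/4))
  refine this.congr_deriv ?_; simp [UD2]; ring
lemma hUD2 (p ω : ℝ) : HasDerivAt (UD2 p) (UD3 p ω) ω := by
  have := (((Real.hasDerivAt_cos ω).mul (hc2 ω)).const_mul (p/2)).sub
    (((Real.hasDerivAt_sin ω).mul (hs2 ω)).const_mul (5*p/8))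
  refine this.congr_deriv ?_; simp [UD3]; ring
lemma hVD0 (p ω : ℝ) : HasDerivAt (VD0 p) (VD1 p ω) ω := by
  have := (((Real.hasDerivAt_sin ω).const_mul (p/2)).mul (hc2 ω)).neg
  refine this.congr_deriv ?_; simp [VD1]; ring
lemma hVD1 (p ω : ℝ) : HasDerivAt (VD1 p) (VD2 p ω) ω := by
  have := ((((Real.hasDerivAt_cos ω).mul (hc2 ω)).const_mul (p/2)).neg).add
    (((Real.hasDerivAt_sin ω).mul (hs2 ω)).const_mul (p/4))
  refine this.congr_deriv ?_; simp [VD2]; ring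
lemma hVD2 (p ω : ℝ) : HasDerivAt (VD2 p) (VD3 p ω) ω := by
  have := (((Real.hasDerivAt_sin ω).mul (hc2 ω)).const_mul (5*p/8)).add
    (((Real.hasDerivAt_cos ω).mul (hs2 ω)).const_mul (p/2))
  refine this.congr_deriv ?_; simp [VD3]; ring

lemma helical_eq_W (p : ℝ) : helical p = W A0 B0 (U0 p) (V0 p) := by
  funext ω
  ext <;> simp [helical, W, kQ_re, kQ_imI, kQ_imJ, kQ_imK, q1_re, q1_imI, q1_imJ, q1_imK, q0_re, q0_imI, q0_imJ, q0_imK, qs_re, qs_imI, qs_imJ, qs_imK, A0, B0, U0, V0, smul_sub, smul_smul]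

lemma darboux_eq_W (p : ℝ) : darboux p = W A0 B0 (UD0 p) (VD0 p) := by
  funext ω
  ext <;> simp [darboux, W, kQ_re, kQ_imI, kQ_imJ, kQ_imK, q1_re, q1_imI, q1_imJ, q1_imK, q0_re, q0_imI, q0_imJ, q0_imK, qs_re, qs_imI, qs_imJ, qs_imK, A0, B0, UD0, VD0, smul_sub, smul_smul]

set_option maxHeartbeats 1600000 in
/-- The helical motion and the vertical Darboux motion of equal pitch/amplitude
agree at `ω = 0` up to second derivatives, but their third derivatives differ. -/
theorem helical_darboux_second_order_contact (p : ℝ) (hp : p ≠ 0) :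
    helical p 0 = darboux p 0 ∧
    iteratedDeriv 1 (helical p) 0 = iteratedDeriv 1 (darboux p) 0 ∧
    iteratedDeriv 1 (helical p) 0
      = inl ((1 / 2 : ℝ) • kQ) + inr (-((p / 2) • kQ)) ∧
    iteratedDeriv 2 (helical p) 0 = iteratedDeriv 2 (darboux p) 0 ∧
    iteratedDeriv 2 (helical p) 0
      = inl ((-(1 / 4) : ℝ) • (1 : Quaternion ℝ)) + inr ((p / 2) • (1 : Quaternion ℝ)) ∧
    iteratedDeriv 3 (helical p) 0
      = inl ((-(1 / 8) : ℝ) • kQ) + inr ((3 * p / 8) • kQ) ∧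
    iteratedDeriv 3 (darboux p) 0
      = inl ((-(1 / 8) : ℝ) • kQ) + inr ((7 * p / 8) • kQ) ∧
    iteratedDeriv 3 (helical p) 0 ≠ iteratedDeriv 3 (darboux p) 0 := by
  have dh1 : deriv (W A0 B0 (U0 p) (V0 p)) = W A1 B1 (U1 p) (V1 p) :=
    funext fun ω => (W_hasDerivAt (hA0 ω) (hB0 ω) (hU0 p ω) (hV0 p ω)).deriv
  have dh2 : deriv (W A1 B1 (U1 p) (V1 p)) = W A2 B2 (U2 p) (V2 p) :=
    funext fun ω => (W_hasDerivAt (hA1 ω) (hB1 ω) (hU1 p ω) (hV1 p ω)).deriv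
  have dh3 : deriv (W A2 B2 (U2 p) (V2 p)) = W A3 B3 (U3 p) (V3 p) :=
    funext fun ω => (W_hasDerivAt (hA2 ω) (hB2 ω) (hU2 p ω) (hV2 p ω)).deriv
  have dd1 : deriv (W A0 B0 (UD0 p) (VD0 p)) = W A1 B1 (UD1 p) (VD1 p) :=
    funext fun ω => (W_hasDerivAt (hA0 ω) (hB0 ω) (hUD0 p ω) (hVD0 p ω)).deriv
  have dd2 : deriv (W A1 B1 (UD1 p) (VD1 p)) = W A2 B2 (UD2 p) (VD2 p) :=
    funext fun ω => (W_hasDerivAt (hA1 ω) (hB1 ω) (hUD1 p ω) (hVD1 p ω)).deriv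
  have dd3 : deriv (W A2 B2 (UD2 p) (VD2 p)) = W A3 B3 (UD3 p) (VD3 p) :=
    funext fun ω => (W_hasDerivAt (hA2 ω) (hB2 ω) (hUD2 p ω) (hVD2 p ω)).deriv
  have i1h : iteratedDeriv 1 (helical p) 0 = W A1 B1 (U1 p) (V1 p) 0 := by
    rw [iteratedDeriv_one, helical_eq_W, dh1]
  have i2h : iteratedDeriv 2 (helical p) 0 = W A2 B2 (U2 p) (V2 p) 0 := by
    rw [show (2 : ℕ) = 1 + 1 from rfl, iteratedDeriv_succ, iteratedDeriv_one,
      helical_eq_W, dh1, dh2]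
  have i3h : iteratedDeriv 3 (helical p) 0 = W A3 B3 (U3 p) (V3 p) 0 := by
    rw [show (3 : ℕ) = 2 + 1 from rfl, iteratedDeriv_succ,
      show (2 : ℕ) = 1 + 1 from rfl, iteratedDeriv_succ, iteratedDeriv_one,
      helical_eq_W, dh1, dh2, dh3]
  have i1d : iteratedDeriv 1 (darboux p) 0 = W A1 B1 (UD1 p) (VD1 p) 0 := by
    rw [iteratedDeriv_one, darboux_eq_W, dd1]
  have i2d : iteratedDeriv 2 (darboux p) 0 = W A2 B2 (UD2 p) (VD2 p) 0 := by
    rw [show (2 : ℕ) = 1 + 1 from rfl, iteratedDeriv_succ, iteratedDeriv_one,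
      darboux_eq_W, dd1, dd2]
  have i3d : iteratedDeriv 3 (darboux p) 0 = W A3 B3 (UD3 p) (VD3 p) 0 := by
    rw [show (3 : ℕ) = 2 + 1 from rfl, iteratedDeriv_succ,
      show (2 : ℕ) = 1 + 1 from rfl, iteratedDeriv_succ, iteratedDeriv_one,
      darboux_eq_W, dd1, dd2, dd3]
  refine ⟨?_, ?_, ?_, ?_, ?_, ?_, ?_, ?_⟩
  · simp [helical, darboux]
  · rw [i1h, i1d]
    ext <;> simp [W, U1, V1, UD1, VD1]
  · rw [i1h]
    ext <;> simp [W, kQ_re, kQ_imI, kQ_imJ, kQ_imK, q1_re, q1_imI, q1_imJ, q1_imK, q0_re, q0_imI, q0_imJ, q0_imK, qs_re, qs_imI, qs_imJ, qs_imK, A1, B1, U1, V1]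
  · rw [i2h, i2d]
    ext <;> simp [W, U2, V2, UD2, VD2]
  · rw [i2h]
    ext <;> simp [W, kQ_re, kQ_imI, kQ_imJ, kQ_imK, q1_re, q1_imI, q1_imJ, q1_imK, q0_re, q0_imI, q0_imJ, q0_imK, qs_re, qs_imI, qs_imJ, qs_imK, A2, B2, U2, V2]
  · rw [i3h]
    ext <;> simp [W, kQ_re, kQ_imI, kQ_imJ, kQ_imK, q1_re, q1_imI, q1_imJ, q1_imK, q0_re, q0_imI, q0_imJ, q0_imK, qs_re, qs_imI, qs_imJ, qs_imK, A3, B3, U3, V3]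
  · rw [i3d]
    ext <;> simp [W, kQ_re, kQ_imI, kQ_imJ, kQ_imK, q1_re, q1_imI, q1_imJ, q1_imK, q0_re, q0_imI, q0_imJ, q0_imK, qs_re, qs_imI, qs_imJ, qs_imK, A3, B3, UD3, VD3]
  · rw [i3h, i3d]
    intro h
    have h4 := congrArg (fun z => (snd z).imK) h
    simp [W, kQ_re, kQ_imI, kQ_imJ, kQ_imK, q1_re, q1_imI, q1_imJ, q1_imK, q0_re, q0_imI, q0_imJ, q0_imK, qs_re, qs_imI, qs_imJ, qs_imK, A3, B3, U3, V3, UD3, VD3] at h4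
    have : p = 0 := by linarith
    exact hp this
end
end

section
/- For any real numbers k and κ, there exist real numbers a and φ such that the graph of x ↦ a·sin(x) has slope k and signed curvature κ at the point with abscissa φ; i.e., a·cos(φ) = k and −a·sin(φ)/(1 + a²cos²(φ))^(3/2) = κ. -/
open Real

/-- For any prescribed slope `k` and signed curvature `κ`, some point on the
graph of `x ↦ a·sin x` (for a suitable `a`) realizes them. -/
theorem exists_sine_with_slope_and_curvature (k κ : ℝ) :
    ∃ a φ : ℝ, a * cos φ = k ∧
      -(a * sin φ) / (1 + a ^ 2 * cos φ ^ 2) ^ ((3 : ℝ) / 2) = κ := by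
  set s : ℝ := -κ * (1 + k ^ 2) ^ ((3 : ℝ) / 2) with hs
  set z : ℂ := ⟨k, s⟩ with hz
  refine ⟨‖z‖, Complex.arg z, ?_, ?_⟩
  · exact Complex.norm_mul_cos_arg z
  · have h1 : ‖z‖ * Real.cos (Complex.arg z) = k := by
      exact Complex.norm_mul_cos_arg z
    have h2 : ‖z‖ * Real.sin (Complex.arg z) = s := by
      exact Complex.norm_mul_sin_arg z
    have hsq : (‖z‖) ^ 2 * Real.cos (Complex.arg z) ^ 2 = k ^ 2 := by
      rw [← mul_pow, h1]
    rw [h2, hsq, hs]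
    have hpos : (0 : ℝ) < (1 + k ^ 2) ^ ((3 : ℝ) / 2) := by
      apply Real.rpow_pos_of_pos
      positivity
    field_simp
end

section
/- Let c(t) = t² + 1 + ε(γ₁t + γ₀ + b·j·t + a·i) be a polynomial with dual quaternion coefficients, where a > b ≥ 0 are reals and γ₀, γ₁ ∈ ℝ. Then for each choice of sign and each pair (v₂, v₃) ∈ ℝ², setting p₁ = ±√(a²−b²)/a, p₂ = 0, p₃ = −b/a, u₂ = −v₂ + b, u₃ = −v₃, u₀ = γ₁/2 ∓ √(a²−b²)/2, u₁ = −v₁ = ±(aγ₀ − 2bv₃)/(2√(a²−b²)), v₀ = γ₁/2 ± √(a²−b²)/2, the polynomials F₁ = t + p₁i + p₂j + p₃k + ε(u₀ + u₁i + u₂j + u₃k) and F₂ = t − p₁i − p₂j − p₃k + ε(v₀ + v₁i + v₂j + v₃k) satisfy c = F₁·F₂. -/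
open TrivSqZeroExt Polynomial

noncomputable section

/-- A real quaternion viewed as the primal part of a dual quaternion. -/
def pQ (q : Quaternion ℝ) : Quaternion (DualNumber ℝ) :=
  ⟨inl q.re, inl q.imI, inl q.imJ, inl q.imK⟩

/-- A real quaternion multiplied by `ε`, i.e. the dual part of a dual quaternion. -/
def eQ (q : Quaternion ℝ) : Quaternion (DualNumber ℝ) :=
  ⟨inr q.re, inr q.imI, inr q.imJ, inr q.imK⟩

lemma pQ_add_eQ_mul (p u q v : Quaternion ℝ) :
    (pQ p + eQ u) * (pQ q + eQ v) = pQ (p * q) + eQ (p * v + u * q) := by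
  ext <;> simp <;> simp [pQ, eQ, QuaternionAlgebra.re_mul, QuaternionAlgebra.imI_mul,
    QuaternionAlgebra.imJ_mul, QuaternionAlgebra.imK_mul, TrivSqZeroExt.ext_iff] <;> ring

lemma pQ_add_eQ_add (p u q v : Quaternion ℝ) :
    (pQ p + eQ u) + (pQ q + eQ v) = pQ (p + q) + eQ (u + v) := by
  ext <;> simp <;> simp [pQ, eQ]

lemma pQ_zero : pQ 0 = 0 := by
  ext <;> simp [pQ, QuaternionAlgebra.ext_iff] <;> rfl

lemma factor_key {R : Type*} [Ring R] (q1 q2 : R) :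
    (X + C q1) * (X + C q2) = X ^ 2 + C (q1 * q2) + C (q1 + q2) * X := by
  rw [mul_add, add_mul, add_mul, C_mul, C_add, add_mul, (commute_X (C q2)).eq, ← sq]
  abel

/-- Factorizations of the elliptic translation polynomial
`c = t² + 1 + ε(γ₁t + γ₀ + b·j·t + a·i)`: for each sign `σ = ±1` and each pair
`(v₂, v₃)`, the stated linear polynomials `F₁`, `F₂` satisfy `c = F₁·F₂`. -/
theorem elliptic_translation_factorization
    (a b γ₀ γ₁ v₂ v₃ σ : ℝ) (hba : b < a) (hb : 0 ≤ b) (hσ : σ = 1 ∨ σ = -1) :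
    (X ^ 2 + C (pQ 1 + eQ ⟨γ₀, a, 0, 0⟩) + C (eQ ⟨γ₁, 0, b, 0⟩) * X :
        Polynomial (Quaternion (DualNumber ℝ)))
    = (X + C (pQ ⟨0, σ * Real.sqrt (a ^ 2 - b ^ 2) / a, 0, -b / a⟩
          + eQ ⟨γ₁ / 2 - σ * Real.sqrt (a ^ 2 - b ^ 2) / 2,
                σ * (a * γ₀ - 2 * b * v₃) / (2 * Real.sqrt (a ^ 2 - b ^ 2)),
                -v₂ + b, -v₃⟩))
      * (X + C (pQ ⟨0, -(σ * Real.sqrt (a ^ 2 - b ^ 2) / a), 0, b / a⟩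
          + eQ ⟨γ₁ / 2 + σ * Real.sqrt (a ^ 2 - b ^ 2) / 2,
                -(σ * (a * γ₀ - 2 * b * v₃) / (2 * Real.sqrt (a ^ 2 - b ^ 2))),
                v₂, v₃⟩)) := by
  have ha : (0:ℝ) < a := lt_of_le_of_lt hb hba
  have hab : (0:ℝ) < a ^ 2 - b ^ 2 := by nlinarith
  have hs2 : Real.sqrt (a ^ 2 - b ^ 2) ^ 2 = a ^ 2 - b ^ 2 := Real.sq_sqrt hab.le
  have hspos : 0 < Real.sqrt (a ^ 2 - b ^ 2) := Real.sqrt_pos.mpr hab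
  have hσ2 : σ ^ 2 = 1 := by rcases hσ with h | h <;> simp [h]
  rw [factor_key]
  erw [pQ_add_eQ_mul, pQ_add_eQ_add]
  set s := Real.sqrt (a ^ 2 - b ^ 2) with hs
  clear_value s
  have hmul : (⟨0, σ * s / a, 0, -b / a⟩ : Quaternion ℝ) *
      ⟨0, -(σ * s / a), 0, b / a⟩ = 1 := by
    ext <;> simp [QuaternionAlgebra.re_mul, QuaternionAlgebra.imI_mul,
      QuaternionAlgebra.imJ_mul, QuaternionAlgebra.imK_mul] <;> (try field_simp) <;>
      first
        | ring1
        | linear_combination σ ^ 2 * hs2 + (a ^ 2 - b ^ 2) * hσ2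
        | linear_combination 4 * a ^ 3 * σ ^ 2 * hs2 + 4 * a ^ 3 * (a ^ 2 - b ^ 2) * hσ2
        | linear_combination 4 * s ^ 2 * a ^ 3 * (a * γ₀ - 2 * b * v₃) * hσ2
  have hdual : (⟨0, σ * s / a, 0, -b / a⟩ : Quaternion ℝ) *
        ⟨γ₁ / 2 + σ * s / 2, -(σ * (a * γ₀ - 2 * b * v₃) / (2 * s)), v₂, v₃⟩
      + (⟨γ₁ / 2 - σ * s / 2, σ * (a * γ₀ - 2 * b * v₃) / (2 * s),
          -v₂ + b, -v₃⟩ : Quaternion ℝ) * ⟨0, -(σ * s / a), 0, b / a⟩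
      = ⟨γ₀, a, 0, 0⟩ := by
    ext <;> simp [QuaternionAlgebra.re_mul, QuaternionAlgebra.imI_mul,
      QuaternionAlgebra.imJ_mul, QuaternionAlgebra.imK_mul] <;> (try field_simp) <;>
      first
        | ring1
        | linear_combination σ ^ 2 * hs2 + (a ^ 2 - b ^ 2) * hσ2
        | linear_combination 4 * a ^ 3 * σ ^ 2 * hs2 + 4 * a ^ 3 * (a ^ 2 - b ^ 2) * hσ2
        | linear_combination 4 * s ^ 2 * a ^ 3 * (a * γ₀ - 2 * b * v₃) * hσ2
        | linear_combination (2 * a * γ₀ - 4 * b * v₃) * hσ2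
        | linear_combination 2 * s ^ 2 * hσ2 + 2 * hs2
  have hsum : (⟨0, σ * s / a, 0, -b / a⟩ : Quaternion ℝ) +
      ⟨0, -(σ * s / a), 0, b / a⟩ = 0 := by
    ext <;> simp <;> ring1
  have husum : (⟨γ₁ / 2 - σ * s / 2, σ * (a * γ₀ - 2 * b * v₃) / (2 * s),
        -v₂ + b, -v₃⟩ : Quaternion ℝ)
      + ⟨γ₁ / 2 + σ * s / 2, -(σ * (a * γ₀ - 2 * b * v₃) / (2 * s)), v₂, v₃⟩
      = ⟨γ₁, 0, b, 0⟩ := by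
    ext <;> simp <;> ring
  erw [hmul, hdual, hsum, husum, pQ_zero, zero_add]
  rfl

end
end

section
/- Let c(t) = t² + 1 + ε(γ₁t + γ₀ + b·j·t + b·i) with b > 0 (circular translation). Then for every v₁, v₂, v₃ with u₃ = −v₃ = −γ₀/2, the polynomials F₁ = t − k + ε(γ₁/2 + u₁i + (b − v₂)j − (γ₀/2)k) and F₂ = t + k + ε(γ₁/2 − u₁i + v₂j + (γ₀/2)k) with u₁ = −v₁ satisfy c = F₁·F₂. -/
open TrivSqZeroExt Polynomial

noncomputable section

private lemma expand_aux {R : Type*} [Ring R] (a b : R) :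
    (X ^ 2 + C (a * b) + C (a + b) * X : Polynomial R) = (X + C a) * (X + C b) := by
  simp only [C_add, C_mul]
  noncomm_ring
  simp [X_mul]

private lemma mul_aux (b γ₀ γ₁ u₁ v₂ : ℝ) :
    (pQ ⟨0, 0, 0, -1⟩ + eQ ⟨γ₁ / 2, u₁, b - v₂, -(γ₀ / 2)⟩)
    * (pQ ⟨0, 0, 0, 1⟩ + eQ ⟨γ₁ / 2, -u₁, v₂, γ₀ / 2⟩)
    = pQ 1 + eQ ⟨γ₀, b, 0, 0⟩ := by
  rw [Quaternion.ext_iff]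
  simp only [Quaternion.ext_iff, Quaternion.re_mul, Quaternion.imI_mul,
    Quaternion.imJ_mul, Quaternion.imK_mul, Quaternion.re_add, Quaternion.imI_add,
    Quaternion.imJ_add, Quaternion.imK_add]
  simp only [pQ, eQ]
  simp [add_mul, mul_add, inl_mul_inl, inl_mul_inr, inr_mul_inl, inr_mul_inr,
    ← inl_add, ← inr_add, Quaternion.re_one, Quaternion.imI_one, Quaternion.imJ_one,
    Quaternion.imK_one]
  constructor <;> module

private lemma add_aux (b γ₀ γ₁ u₁ v₂ : ℝ) :
    (pQ ⟨0, 0, 0, -1⟩ + eQ ⟨γ₁ / 2, u₁, b - v₂, -(γ₀ / 2)⟩)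
    + (pQ ⟨0, 0, 0, 1⟩ + eQ ⟨γ₁ / 2, -u₁, v₂, γ₀ / 2⟩)
    = eQ ⟨γ₁, 0, b, 0⟩ := by
  rw [Quaternion.ext_iff]
  simp only [Quaternion.ext_iff, Quaternion.re_add, Quaternion.imI_add,
    Quaternion.imJ_add, Quaternion.imK_add]
  simp only [pQ, eQ]
  refine ⟨?_, ?_, ?_, ?_⟩ <;> simp [← inl_add, ← inr_add] <;> module

/-- Factorization of the circular translation polynomial
`c = t² + 1 + ε(γ₁t + γ₀ + b·j·t + b·i)`, `b > 0`: for every `u₁`, `v₂`, the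
linear polynomials `F₁ = t − k + ε(γ₁/2 + u₁i + (b−v₂)j − (γ₀/2)k)` and
`F₂ = t + k + ε(γ₁/2 − u₁i + v₂j + (γ₀/2)k)` satisfy `c = F₁·F₂`. -/
theorem circular_translation_factorization
    (b γ₀ γ₁ u₁ v₂ : ℝ) (hb : 0 < b) :
    (X ^ 2 + C (pQ 1 + eQ ⟨γ₀, b, 0, 0⟩) + C (eQ ⟨γ₁, 0, b, 0⟩) * X :
        Polynomial (Quaternion (DualNumber ℝ)))
    = (X + C (pQ ⟨0, 0, 0, -1⟩ + eQ ⟨γ₁ / 2, u₁, b - v₂, -(γ₀ / 2)⟩))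
      * (X + C (pQ ⟨0, 0, 0, 1⟩ + eQ ⟨γ₁ / 2, -u₁, v₂, γ₀ / 2⟩)) := by
  rw [← mul_aux b γ₀ γ₁ u₁ v₂, ← add_aux b γ₀ γ₁ u₁ v₂]
  exact expand_aux _ _

end
end

section
/- Verification of a factorization: with F₁ = t + (√3·i − k)/2 − ε(i − 3j + √3·k)/3, F₂ = t − (√3·i − k)/2 + ε(3√3 + i + √3·k)/3, G₁ = t − (√3·i + k)/2 + ε(3√3 + i + 3j − √3·k)/3, G₂ = t + (√3·i + k)/2 + ε(−i + √3·k)/3, one has F₁·F₂ = G₁·G₂ = t² + 1 + ε(√3·t + j·t + 2i). -/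
open TrivSqZeroExt Polynomial

noncomputable section

lemma key_factor {R : Type*} [Ring R] (a b s p : R) (hs : a + b = s) (hp : a * b = p) :
    (X + C a) * (X + C b) = X ^ 2 + C p + C s * X := by
  subst hs hp
  rw [add_mul, mul_add, mul_add, map_add, add_mul, sq, X_mul (p := C b), C_mul]
  abel

/-- Verification of the two factorizations `F₁·F₂ = G₁·G₂ = t² + 1 + ε(√3·t + j·t + 2i)`
from the elliptic translation example. -/
theorem example_factorizations :
    ((X + C (pQ ⟨0, Real.sqrt 3 / 2, 0, -(1 / 2)⟩
        + eQ ⟨0, -(1 / 3), 1, -(Real.sqrt 3 / 3)⟩))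
      * (X + C (pQ ⟨0, -(Real.sqrt 3 / 2), 0, 1 / 2⟩
        + eQ ⟨Real.sqrt 3, 1 / 3, 0, Real.sqrt 3 / 3⟩)) :
        Polynomial (Quaternion (DualNumber ℝ)))
      = X ^ 2 + C (pQ 1 + eQ ⟨0, 2, 0, 0⟩) + C (eQ ⟨Real.sqrt 3, 0, 1, 0⟩) * X ∧
    ((X + C (pQ ⟨0, -(Real.sqrt 3 / 2), 0, -(1 / 2)⟩
        + eQ ⟨Real.sqrt 3, 1 / 3, 1, -(Real.sqrt 3 / 3)⟩))
      * (X + C (pQ ⟨0, Real.sqrt 3 / 2, 0, 1 / 2⟩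
        + eQ ⟨0, -(1 / 3), 0, Real.sqrt 3 / 3⟩)) :
        Polynomial (Quaternion (DualNumber ℝ)))
      = X ^ 2 + C (pQ 1 + eQ ⟨0, 2, 0, 0⟩) + C (eQ ⟨Real.sqrt 3, 0, 1, 0⟩) * X := by
  have h3 : Real.sqrt 3 * Real.sqrt 3 = 3 := Real.mul_self_sqrt (by norm_num)
  constructor <;> apply key_factor <;>
  · rw [Quaternion.ext_iff]
    simp only [Quaternion.ext_iff, Quaternion.re_add, Quaternion.imI_add,
      Quaternion.imJ_add, Quaternion.imK_add, Quaternion.re_mul, Quaternion.imI_mul,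
      Quaternion.imJ_mul, Quaternion.imK_mul, Quaternion.re_one, Quaternion.imI_one,
      Quaternion.imJ_one, Quaternion.imK_one]
    simp only [pQ, eQ, Quaternion.re_one, Quaternion.imI_one, Quaternion.imJ_one, Quaternion.imK_one]
    refine ⟨?_, ?_, ?_, ?_⟩ <;> ext <;>
      simp [inl_mul_inl, inr_mul_inr] <;> nlinarith [h3]

end
end

section
/- Let c = p + εd ∈ DH[t] be a quadratic polynomial whose primal part p has no real polynomial factor of positive degree and whose norm satisfies p·conj(p) = s² for an irreducible monic quadratic s ∈ ℝ[t]. If c admits a factorization c = F₁F₂ into polynomials F₁, F₂ of degree 1 in DH[t] whose norms are quadratic polynomials with dual coefficients of the form s + ελᵢ with λᵢ ∈ ℝ[t], then s divides the real polynomial p·conj(d) + d·conj(p); equivalently, the dual part of the norm polynomial c·conj(c) is divisible by s. -/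
open TrivSqZeroExt Polynomial

noncomputable section

/-- Quaternion conjugation of a polynomial, applied coefficientwise. -/
def pconj (f : Polynomial (Quaternion (DualNumber ℝ))) :
    Polynomial (Quaternion (DualNumber ℝ)) :=
  f.sum fun n a => C (star a) * X ^ n

/-! ### Abstract lemmas -/

section Abstract

variable {A : Type*} [Ring A]

/-- abstract coefficientwise star of a polynomial -/
def pc [StarRing A] (f : A[X]) : A[X] := f.sum fun n a => C (star a) * X ^ n

lemma pc_coeff [StarRing A] (f : A[X]) (n : ℕ) : (pc f).coeff n = star (f.coeff n) := by
  rw [pc, Polynomial.coeff_sum, Polynomial.sum]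
  by_cases h : n ∈ f.support
  · rw [Finset.sum_eq_single n (fun m _ hm => by
        simp [coeff_C_mul, coeff_X_pow, Ne.symm hm]) (fun hn => absurd h hn)]
    simp [coeff_C_mul, coeff_X_pow]
  · rw [Polynomial.notMem_support_iff.mp h, star_zero]
    refine Finset.sum_eq_zero fun m hm => ?_
    have : m ≠ n := fun e => h (e ▸ hm)
    simp [coeff_C_mul, coeff_X_pow, this.symm]

lemma pc_add [StarRing A] (f g : A[X]) : pc (f + g) = pc f + pc g :=
  Polynomial.ext fun n => by simp [pc_coeff]

lemma pc_C [StarRing A] (a : A) : pc (C a) = C (star a) :=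
  Polynomial.ext fun n => by simp [pc_coeff, coeff_C, apply_ite (star : A → A)]

lemma pc_mul [StarRing A] (f g : A[X]) : pc (f * g) = pc g * pc f := by
  refine Polynomial.ext fun n => ?_
  rw [pc_coeff, coeff_mul, coeff_mul, star_sum]
  conv_lhs => rw [← Finset.HasAntidiagonal.map_swap_antidiagonal (n := n), Finset.sum_map]
  simp [pc_coeff, star_mul]

lemma C_comm (a : A) (ha : ∀ x, a * x = x * a) (f : A[X]) : C a * f = f * C a :=
  Polynomial.ext fun n => by rw [coeff_C_mul, coeff_mul_C, ha]

lemma CC_zero (a : A) (h : a * a = 0) : (C a : A[X]) * C a = 0 := by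
  rw [← C_mul, h, C_0]

lemma map_comm {R : Type*} [CommSemiring R] [Algebra R A] (r : R[X]) (f : A[X]) :
    r.map (algebraMap R A) * f = f * r.map (algebraMap R A) := by
  induction r using Polynomial.induction_on' with
  | add u v hu hv => rw [Polynomial.map_add, add_mul, mul_add, hu, hv]
  | monomial k a =>
      rw [Polynomial.map_monomial, ← Polynomial.C_mul_X_pow_eq_monomial, mul_assoc,
        (Polynomial.commute_X_pow f k).eq, ← mul_assoc,
        C_comm _ (fun x => Algebra.commutes a x) f, mul_assoc]

lemma four_mul {M : Type*} [Semigroup M] (a b c d : M) :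
    (a * b) * (c * d) = a * (b * c) * d := by
  rw [mul_assoc, mul_assoc, mul_assoc]

lemma key_ring (E S L₁ L₂ P D CP CD F₁ F₂ G₁ G₂ c cc : A)
    (hc : c = P + E * D) (hcc : cc = CP + E * CD)
    (hc' : c = F₁ * F₂) (hcc' : cc = G₂ * G₁)
    (hE : ∀ x, E * x = x * E) (hE2 : E * E = 0)
    (hS : ∀ x, S * x = x * S) (hL₂ : ∀ x, L₂ * x = x * L₂)
    (hF₁ : F₁ * G₁ = S + E * L₁) (hF₂ : F₂ * G₂ = S + E * L₂)
    (hnorm : P * CP = S * S) :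
    E * (P * CD + D * CP) = E * (S * L₁ + S * L₂) := by
  have lhs : c * cc = S * S + E * (P * CD + D * CP) := by
    rw [hc, hcc, add_mul, mul_add, mul_add, hnorm]
    have h1 : P * (E * CD) = E * (P * CD) := by
      rw [← mul_assoc, ← hE P, mul_assoc]
    have h2 : E * D * CP = E * (D * CP) := mul_assoc _ _ _
    have h3 : E * D * (E * CD) = 0 := by
      rw [mul_assoc, ← mul_assoc D E, ← hE D, mul_assoc, ← mul_assoc, hE2, zero_mul]
    rw [h1, h2, h3, add_zero, mul_add, add_assoc]
  have rhs : c * cc = S * S + E * (S * L₁ + S * L₂) := by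
    rw [hc', hcc', four_mul, hF₂]
    have hcen : ∀ x, (S + E * L₂) * x = x * (S + E * L₂) := by
      intro x
      rw [add_mul, mul_add, hS x]
      congr 1
      rw [mul_assoc, hL₂ x, ← mul_assoc, hE x, mul_assoc]
    rw [mul_assoc, hcen G₁, ← mul_assoc, hF₁]
    rw [add_mul, mul_add, mul_add, mul_add]
    have h1 : S * (E * L₂) = E * (S * L₂) := by rw [← mul_assoc, hS E, mul_assoc]
    have h2 : E * L₁ * S = E * (S * L₁) := by rw [mul_assoc, ← hS L₁]
    have h3 : E * L₁ * (E * L₂) = 0 := by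
      rw [mul_assoc, ← mul_assoc L₁ E, ← hE L₁, mul_assoc, ← mul_assoc, hE2, zero_mul]
    rw [h1, h2, h3, add_zero]
    abel
  rw [lhs] at rhs
  exact add_left_cancel rhs

lemma coeff_mul_mem (S : Subring A) (f g : A[X])
    (hf : ∀ n, f.coeff n ∈ S) (hg : ∀ n, g.coeff n ∈ S) (n : ℕ) :
    (f * g).coeff n ∈ S := by
  rw [coeff_mul]
  exact Subring.sum_mem _ fun x _ => S.mul_mem (hf _) (hg _)

lemma coeff_add_mem (S : Subring A) (f g : A[X])
    (hf : ∀ n, f.coeff n ∈ S) (hg : ∀ n, g.coeff n ∈ S) (n : ℕ) :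
    (f + g).coeff n ∈ S := by
  rw [coeff_add]; exact S.add_mem (hf n) (hg n)

lemma pc_coeff_mem [StarRing A] (S : Subring A) (hstar : ∀ x ∈ S, star x ∈ S)
    (f : A[X]) (hf : ∀ n, f.coeff n ∈ S) (n : ℕ) : (pc f).coeff n ∈ S := by
  rw [pc_coeff]; exact hstar _ (hf n)

end Abstract

/-! ### Abstract quaternion lemmas -/

section QAbstract

variable {R S' : Type*} [CommRing R] [CommRing S']

/-- componentwise ring hom on quaternions -/
def qmap (g : R →+* S') : Quaternion R →+* Quaternion S' where
  toFun q := ⟨g q.re, g q.imI, g q.imJ, g q.imK⟩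
  map_one' := by ext <;> simp [Quaternion.re_one, Quaternion.imI_one, Quaternion.imJ_one, Quaternion.imK_one]
  map_mul' a b := by
    ext <;> simp [Quaternion.re_mul, Quaternion.imI_mul, Quaternion.imJ_mul, Quaternion.imK_mul] <;>
      erw [QuaternionAlgebra.mk_mul_mk] <;> simp <;> ring
  map_zero' := by ext <;> simp [Quaternion.re_zero, Quaternion.imI_zero, Quaternion.imJ_zero, Quaternion.imK_zero]
  map_add' a b := by ext <;> simp <;> rfl

@[simp] lemma qmap_re (g : R →+* S') (q : Quaternion R) : (qmap g q).re = g q.re := rfl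
@[simp] lemma qmap_imI (g : R →+* S') (q : Quaternion R) : (qmap g q).imI = g q.imI := rfl
@[simp] lemma qmap_imJ (g : R →+* S') (q : Quaternion R) : (qmap g q).imJ = g q.imJ := rfl
@[simp] lemma qmap_imK (g : R →+* S') (q : Quaternion R) : (qmap g q).imK = g q.imK := rfl

lemma qmap_star (g : R →+* S') (q : Quaternion R) : qmap g (star q) = star (qmap g q) := by
  ext <;> simp

/-- quaternion with dual parts -/
def qE (q : Quaternion R) : Quaternion (DualNumber R) :=
  ⟨inr q.re, inr q.imI, inr q.imJ, inr q.imK⟩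

lemma qE_inj (a b : Quaternion R) (h : qE a = qE b) : a = b := by
  ext
  · exact inr_injective (congrArg QuaternionAlgebra.re h)
  · exact inr_injective (congrArg QuaternionAlgebra.imI h)
  · exact inr_injective (congrArg QuaternionAlgebra.imJ h)
  · exact inr_injective (congrArg QuaternionAlgebra.imK h)

lemma eE_mul_eE : (((inr (1:R) : DualNumber R) : Quaternion (DualNumber R)))
    * (((inr (1:R) : DualNumber R) : Quaternion (DualNumber R))) = 0 := by
  rw [← Quaternion.coe_mul, inr_mul_inr, Quaternion.coe_zero]

lemma eE_mul_qmap (q : Quaternion R) :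
    (((inr (1:R) : DualNumber R) : Quaternion (DualNumber R))) * qmap (inlHom R R) q = qE q := by
  ext <;> simp [Quaternion.re_mul, Quaternion.imI_mul, Quaternion.imJ_mul, Quaternion.imK_mul,
    qE, inr_mul_inl, inr_mul_inr, op_smul_eq_smul, smul_eq_mul]

lemma algebraMap_eq_qmap (r : R) :
    (algebraMap R (Quaternion (DualNumber R)) : R →+* Quaternion (DualNumber R)) r = qmap (inlHom R R) (algebraMap R (Quaternion R) r) := by
  ext <;> rfl

end QAbstract

section Bridge

local notation "Q" => Quaternion (DualNumber ℝ)

def Φ : Quaternion ℝ →+* Quaternion (DualNumber ℝ) := qmap (inlHom ℝ ℝ)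

lemma pQ_eq (q : Quaternion ℝ) : pQ q = Φ q := rfl
lemma eQ_eq (q : Quaternion ℝ) : eQ q = qE q := rfl
lemma eQ_one_eq : eQ 1 = (((inr (1:ℝ) : DualNumber ℝ) : Quaternion (DualNumber ℝ))) := rfl
lemma pconj_eq (f : Q[X]) : pconj f = pc f := rfl

lemma pconj_coeff' (f : Q[X]) (n : ℕ) : (pconj f).coeff n = star (f.coeff n) := by
  rw [pconj_eq]; exact pc_coeff f n

lemma pconj_add' (f g : Q[X]) : pconj (f + g) = pconj f + pconj g := by
  rw [pconj_eq, pconj_eq, pconj_eq]; exact pc_add f g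

lemma pconj_mul' (f g : Q[X]) : pconj (f * g) = pconj g * pconj f := by
  rw [pconj_eq, pconj_eq, pconj_eq]; exact pc_mul f g

lemma pconj_C' (a : Q) : pconj (C a) = C (star a) := by
  rw [pconj_eq]; exact pc_C a

lemma E_comm (f : Q[X]) : C (eQ 1) * f = f * C (eQ 1) :=
  C_comm _ (fun x => by rw [eQ_one_eq]; exact Quaternion.coe_commutes _ x) f

lemma E_sq : C (eQ 1) * C (eQ 1) = (0 : Q[X]) :=
  CC_zero _ (by rw [eQ_one_eq]; exact eE_mul_eE)

lemma S_comm (r : Polynomial ℝ) (f : Q[X]) :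
    r.map (algebraMap ℝ (Quaternion (DualNumber ℝ))) * f
      = f * r.map (algebraMap ℝ (Quaternion (DualNumber ℝ))) :=
  map_comm r f

lemma star_eQ1 : star (eQ 1) = eQ 1 := by
  rw [eQ_one_eq]; exact Quaternion.star_coe _

lemma pconj_E_mul (d : Q[X]) : pconj (C (eQ 1) * d) = C (eQ 1) * pconj d := by
  rw [pconj_mul', pconj_C', star_eQ1]; exact (E_comm (pconj d)).symm

lemma coeff_C_mul' (a : Q) (f : Q[X]) (n : ℕ) : (C a * f).coeff n = a * f.coeff n :=
  Polynomial.coeff_C_mul f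

lemma coeff_map' (r : Polynomial ℝ) (n : ℕ) :
    (r.map (algebraMap ℝ (Quaternion (DualNumber ℝ)))).coeff n
      = (algebraMap ℝ (Quaternion (DualNumber ℝ)) : ℝ →+* Quaternion (DualNumber ℝ)) (r.coeff n) :=
  Polynomial.coeff_map _ _

lemma eQ1_mul_pQ (q : Quaternion ℝ) : eQ 1 * pQ q = eQ q := by
  rw [eQ_one_eq, pQ_eq, eQ_eq]; exact eE_mul_qmap q

lemma star_pQ (q : Quaternion ℝ) : star (pQ q) = pQ (star q) := by
  rw [pQ_eq, pQ_eq]; exact (qmap_star _ q).symm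

lemma halg (r : ℝ) :
    (algebraMap ℝ (Quaternion (DualNumber ℝ)) : ℝ →+* Quaternion (DualNumber ℝ)) r = pQ (algebraMap ℝ (Quaternion ℝ) r) := by
  rw [pQ_eq]; exact algebraMap_eq_qmap r

lemma pQ_cancel (x y : Quaternion ℝ) (h : eQ 1 * pQ x = eQ 1 * pQ y) : pQ x = pQ y := by
  rw [eQ1_mul_pQ, eQ1_mul_pQ, eQ_eq, eQ_eq] at h
  exact congrArg pQ (qE_inj x y h)

lemma map_sq (s : Polynomial ℝ) :
    (s ^ 2).map (algebraMap ℝ (Quaternion (DualNumber ℝ)))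
      = s.map (algebraMap ℝ (Quaternion (DualNumber ℝ)))
        * s.map (algebraMap ℝ (Quaternion (DualNumber ℝ))) :=
  (Polynomial.map_pow _ _).trans (pow_two _)

lemma map_mul' (r t : Polynomial ℝ) :
    (r * t).map (algebraMap ℝ (Quaternion (DualNumber ℝ)))
      = r.map (algebraMap ℝ (Quaternion (DualNumber ℝ)))
        * t.map (algebraMap ℝ (Quaternion (DualNumber ℝ))) :=
  Polynomial.map_mul _

lemma map_add' (r t : Polynomial ℝ) :
    (r + t).map (algebraMap ℝ (Quaternion (DualNumber ℝ)))
      = r.map (algebraMap ℝ (Quaternion (DualNumber ℝ)))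
        + t.map (algebraMap ℝ (Quaternion (DualNumber ℝ))) :=
  Polynomial.map_add _

lemma Pmul_add (a b c : Q[X]) : a * (b + c) = a * b + a * c := mul_add a b c

end Bridge


/-- If `c = p + εd` is quadratic, `p` has no real factor of positive degree,
`p·conj p = s²` for an irreducible monic quadratic `s ∈ ℝ[t]`, and `c = F₁F₂`
with linear factors whose norms are `s + ελᵢ`, `λᵢ ∈ ℝ[t]`, then `s` divides
the real polynomial `p·conj d + d·conj p` (the dual part of the norm of `c`). -/
theorem null_cone_norm_divisibility
    (p d c : Polynomial (Quaternion (DualNumber ℝ))) (s : Polynomial ℝ)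
    (hp_primal : ∀ n, ∃ q : Quaternion ℝ, p.coeff n = pQ q)
    (hd_primal : ∀ n, ∃ q : Quaternion ℝ, d.coeff n = pQ q)
    (hc : c = p + C (eQ 1) * d) (hc_deg : c.degree = 2)
    (hp_nofactor : ∀ r : Polynomial ℝ, 0 < r.degree →
      ¬ r.map (algebraMap ℝ (Quaternion (DualNumber ℝ))) ∣ p)
    (hs_monic : s.Monic) (hs_deg : s.degree = 2) (hs_irr : Irreducible s)
    (hnorm : p * pconj p = (s ^ 2).map (algebraMap ℝ (Quaternion (DualNumber ℝ))))
    (h_fact : ∃ F₁ F₂ : Polynomial (Quaternion (DualNumber ℝ)),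
      c = F₁ * F₂ ∧ F₁.degree = 1 ∧ F₂.degree = 1 ∧
      ∃ lam₁ lam₂ : Polynomial ℝ,
        F₁ * pconj F₁ = s.map (algebraMap ℝ (Quaternion (DualNumber ℝ)))
          + C (eQ 1) * lam₁.map (algebraMap ℝ (Quaternion (DualNumber ℝ))) ∧
        F₂ * pconj F₂ = s.map (algebraMap ℝ (Quaternion (DualNumber ℝ)))
          + C (eQ 1) * lam₂.map (algebraMap ℝ (Quaternion (DualNumber ℝ)))) :
    ∃ μ : Polynomial ℝ,
      p * pconj d + d * pconj p
        = (s * μ).map (algebraMap ℝ (Quaternion (DualNumber ℝ))) := by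
  classical
  obtain ⟨F₁, F₂, hcf, _, _, lam₁, lam₂, hF₁, hF₂⟩ := h_fact
  refine ⟨lam₁ + lam₂, ?_⟩
  set Alg := (algebraMap ℝ (Quaternion (DualNumber ℝ)) : ℝ →+* Quaternion (DualNumber ℝ)) with hAlg
  -- the key central computation
  have hcc : pconj c = pconj p + C (eQ 1) * pconj d := by
    rw [hc, pconj_add', pconj_E_mul]
  have hcc' : pconj c = pconj F₂ * pconj F₁ := by
    rw [hcf, pconj_mul']
  have key : C (eQ 1) * (p * pconj d + d * pconj p)
      = C (eQ 1) * (s.map Alg * lam₁.map Alg + s.map Alg * lam₂.map Alg) :=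
    key_ring (C (eQ 1)) (s.map Alg) (lam₁.map Alg) (lam₂.map Alg)
      p d (pconj p) (pconj d) F₁ F₂ (pconj F₁) (pconj F₂) c (pconj c)
      hc hcc hcf hcc' E_comm E_sq (S_comm s) (S_comm lam₂) hF₁ hF₂
      (hnorm.trans (map_sq s))
  have hBeq : (s * (lam₁ + lam₂)).map Alg
      = s.map Alg * lam₁.map Alg + s.map Alg * lam₂.map Alg := by
    rw [map_mul', map_add', Pmul_add]
  rw [← hBeq] at key
  -- membership of coefficients in the primal subring
  have hstar0 : ∀ x ∈ RingHom.range (R := Quaternion ℝ) (S := Quaternion (DualNumber ℝ)) Φ, star x ∈ RingHom.range (R := Quaternion ℝ) (S := Quaternion (DualNumber ℝ)) Φ := by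
    rintro x hx
    obtain ⟨q, hq⟩ := RingHom.mem_range.mp hx
    exact RingHom.mem_range.mpr ⟨star q, (qmap_star _ q).trans (congrArg star hq)⟩
  have hp_mem : ∀ n, p.coeff n ∈ Φ.range := fun n => by
    obtain ⟨q, hq⟩ := hp_primal n
    exact RingHom.mem_range.mpr ⟨q, hq.symm⟩
  have hd_mem : ∀ n, d.coeff n ∈ Φ.range := fun n => by
    obtain ⟨q, hq⟩ := hd_primal n
    exact RingHom.mem_range.mpr ⟨q, hq.symm⟩
  have hpcp_mem : ∀ n, (pconj p).coeff n ∈ Φ.range := fun n =>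
    by rw [pconj_coeff']; exact hstar0 _ (hp_mem n)
  have hpcd_mem : ∀ n, (pconj d).coeff n ∈ Φ.range := fun n =>
    by rw [pconj_coeff']; exact hstar0 _ (hd_mem n)
  have hA_mem : ∀ n, (p * pconj d + d * pconj p).coeff n ∈ Φ.range := fun n =>
    coeff_add_mem (A := Quaternion (DualNumber ℝ)) Φ.range _ _
      (coeff_mul_mem Φ.range p (pconj d) hp_mem hpcd_mem)
      (coeff_mul_mem Φ.range d (pconj p) hd_mem hpcp_mem) n
  have hB_mem : ∀ n, ((s * (lam₁ + lam₂)).map Alg).coeff n ∈ Φ.range := fun n => by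
    rw [coeff_map']
    exact RingHom.mem_range.mpr ⟨algebraMap ℝ (Quaternion ℝ) ((s * (lam₁ + lam₂)).coeff n),
      (halg _).symm⟩
  -- cancel ε coefficientwise
  refine Polynomial.ext fun n => ?_
  obtain ⟨a, ha⟩ := RingHom.mem_range.mp (hA_mem n)
  obtain ⟨b, hb⟩ := RingHom.mem_range.mp (hB_mem n)
  have ha' : (p * pconj d + d * pconj p).coeff n = pQ a := ha.symm
  have hb' : ((s * (lam₁ + lam₂)).map Alg).coeff n = pQ b := hb.symm
  have hcoeff := congrArg (fun f => Polynomial.coeff f n) key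
  rw [coeff_C_mul', coeff_C_mul', ha', hb'] at hcoeff
  rw [ha', hb']
  exact pQ_cancel a b hcoeff


end
end
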